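/- For any orthonormal basis B of an octonion algebra over an algebraically closed field and any octonions a, b: ∑_{x∈B} (x·a)(x·b) = (1/2)⟨a,b⟩ ∑_{x∈B} xx, where uv denotes the symmetric operator z ↦ (1/2)(u⟨v,z⟩ + v⟨u,z⟩). -/

import Mathlib

/-- An octonion algebra over `k`: an 8-dimensional unital (not necessarily associative)
`k`-algebra with a nondegenerate multiplicative quadratic form `N`. -/
structure OctonionAlgebra (k : Type) [Field k] (A : Type) [AddCommGroup A] [Module k A] where
  mul : A → A → A
  e : A
  N : A → k
  add_mul' : ∀ a b c : A, mul (a + b) c = mul a c + mul b c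
  mul_add' : ∀ a b c : A, mul a (b + c) = mul a b + mul a c
  smul_mul' : ∀ (t : k) (a b : A), mul (t • a) b = t • mul a b
  mul_smul' : ∀ (t : k) (a b : A), mul a (t • b) = t • mul a b
  one_mul' : ∀ a : A, mul e a = a
  mul_one' : ∀ a : A, mul a e = a
  dim_eq : Module.finrank k A = 8
  N_smul : ∀ (t : k) (a : A), N (t • a) = t ^ 2 * N a
  polar_add_left : ∀ a b c : A,
    N (a + b + c) - N (a + b) - N c = (N (a + c) - N a - N c) + (N (b + c) - N b - N c)
  polar_smul_left : ∀ (t : k) (a b : A),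
    N (t • a + b) - N (t • a) - N b = t * (N (a + b) - N a - N b)
  nondeg : ∀ a : A, (∀ b : A, N (a + b) - N a - N b = 0) → a = 0
  N_mul : ∀ a b : A, N (mul a b) = N a * N b

namespace OctonionAlgebra

variable {k : Type} [Field k] {A : Type} [AddCommGroup A] [Module k A]

/-- The bilinear form associated to the norm: `⟨x,y⟩ = N(x+y) - N(x) - N(y)`. -/
def inner (O : OctonionAlgebra k A) (x y : A) : k := O.N (x + y) - O.N x - O.N y

/-- The standard involution `x̄ = ⟨x,e⟩e - x`. -/
def conj (O : OctonionAlgebra k A) (x : A) : A := O.inner x O.e • O.e - x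

/-- The Malcev product `a*b = ab - ba`. -/
def malcev (O : OctonionAlgebra k A) (a b : A) : A := O.mul a b - O.mul b a

/-- The associator `{a,x,b} = (ax)b - a(xb)`. -/
def assoc (O : OctonionAlgebra k A) (a x b : A) : A :=
  O.mul (O.mul a x) b - O.mul a (O.mul x b)

/-- The standard derivation `D_{a,b} = [L_a,L_b] + [L_a,R_b] + [R_a,R_b]`, as a function. -/
def D (O : OctonionAlgebra k A) (a b x : A) : A :=
  O.mul a (O.mul b x) - O.mul b (O.mul a x)
  + O.mul a (O.mul x b) - O.mul (O.mul a x) b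
  + O.mul (O.mul x b) a - O.mul (O.mul x a) b

end OctonionAlgebra

/-- The value at `z` of the symmetric operator `uv : z ↦ (1/2)(u⟨v,z⟩ + v⟨u,z⟩)`. -/
noncomputable def opval {k A : Type} [Field k] [AddCommGroup A] [Module k A]
    (O : OctonionAlgebra k A) (u v z : A) : A :=
  (2 : k)⁻¹ • (O.inner v z • u + O.inner u z • v)


section Aux

variable {k A : Type} [Field k] [AddCommGroup A] [Module k A]
namespace OctonionAlgebra
variable (O : OctonionAlgebra k A)

lemma inner_comm (x y : A) : O.inner x y = O.inner y x := by
  simp only [OctonionAlgebra.inner, add_comm x y]; ring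

lemma inner_add_left (a b c : A) : O.inner (a + b) c = O.inner a c + O.inner b c :=
  O.polar_add_left a b c

lemma inner_smul_left (t : k) (a c : A) : O.inner (t • a) c = t * O.inner a c :=
  O.polar_smul_left t a c

lemma inner_add_right (a b c : A) : O.inner a (b + c) = O.inner a b + O.inner a c := by
  rw [inner_comm, inner_add_left, inner_comm O b, inner_comm O c]

lemma inner_smul_right (t : k) (a c : A) : O.inner a (t • c) = t * O.inner a c := by
  rw [inner_comm, inner_smul_left, inner_comm]

lemma inner_sub_left (a b c : A) : O.inner (a - b) c = O.inner a c - O.inner b c := by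
  rw [sub_eq_add_neg, ← neg_one_smul k b, inner_add_left, inner_smul_left]; ring

lemma inner_sub_right (a b c : A) : O.inner a (b - c) = O.inner a b - O.inner a c := by
  rw [inner_comm, inner_sub_left, inner_comm O b, inner_comm O c]

/-- inner as a linear map in the first argument -/
def innerL (y : A) : A →ₗ[k] k where
  toFun x := O.inner x y
  map_add' a b := O.inner_add_left a b y
  map_smul' t a := O.inner_smul_left t a y

/-- right multiplication as a linear map -/
def rmul (x : A) : A →ₗ[k] A where
  toFun u := O.mul u x
  map_add' a b := O.add_mul' a b x
  map_smul' t a := O.smul_mul' t a x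

lemma N_add (u v : A) : O.N (u + v) = O.N u + O.N v + O.inner u v := by
  simp [OctonionAlgebra.inner]

lemma inner_self (x : A) : O.inner x x = 2 * O.N x := by
  have h : x + x = (2 : k) • x := (two_smul k x).symm
  simp only [OctonionAlgebra.inner, h, O.N_smul]; ring

lemma mul_sub_right (a u v : A) : O.mul a (u - v) = O.mul a u - O.mul a v := by
  rw [sub_eq_add_neg, ← neg_one_smul k v, O.mul_add', O.mul_smul', neg_one_smul,
    ← sub_eq_add_neg]

/-- key composition identity -/
lemma inner_mul_mul (a c v : A) : O.inner (O.mul a v) (O.mul c v) = O.inner a c * O.N v := by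
  have h := O.N_mul (a + c) v
  rw [O.add_mul'] at h
  simp only [OctonionAlgebra.inner]
  rw [h]
  simp only [O.N_mul]
  ring

/-- fully linearized composition identity -/
lemma inner_mul_mul' (a c u v : A) :
    O.inner (O.mul a u) (O.mul c v) + O.inner (O.mul a v) (O.mul c u)
      = O.inner a c * O.inner u v := by
  have h := O.inner_mul_mul a c (u + v)
  rw [O.mul_add', O.mul_add', O.inner_add_left, O.inner_add_right, O.inner_add_right,
    O.N_add] at h
  rw [O.inner_mul_mul a c u, O.inner_mul_mul a c v] at h
  linear_combination h

lemma adjoint (z y u : A) : O.inner (O.mul z y) u = O.inner z (O.mul u (O.conj y)) := by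
  have h := O.inner_mul_mul' z u y O.e
  rw [O.mul_one', O.mul_one'] at h
  have hc : O.mul u (O.conj y) = O.inner y O.e • u - O.mul u y := by
    rw [OctonionAlgebra.conj, O.mul_sub_right, O.mul_smul', O.mul_one']
  rw [hc, O.inner_sub_right, O.inner_smul_right]
  linear_combination h

lemma nondeg' (a : A) (h : ∀ u, O.inner a u = 0) : a = 0 :=
  O.nondeg a h

lemma conj_add (x y : A) : O.conj (x + y) = O.conj x + O.conj y := by
  simp only [OctonionAlgebra.conj, O.inner_add_left, add_smul]
  abel

lemma N_conj (hNe : O.N O.e = 1) (x : A) : O.N (O.conj x) = O.N x := by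
  have h : O.conj x = O.inner x O.e • O.e + (-1 : k) • x := by
    simp [OctonionAlgebra.conj, sub_eq_add_neg]
  rw [h, O.N_add, O.N_smul, O.N_smul, O.inner_smul_left, O.inner_smul_right,
    inner_comm O x O.e, hNe]
  ring

lemma rconj_mul (hNe : O.N O.e = 1) (z x : A) :
    O.mul (O.mul z (O.conj x)) x = O.N x • z := by
  apply eq_of_sub_eq_zero
  apply O.nondeg'
  intro u
  rw [O.inner_sub_left, O.adjoint (O.mul z (O.conj x)) x u, O.inner_mul_mul,
    O.N_conj hNe, O.inner_smul_left]
  ring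

lemma linearized (hNe : O.N O.e = 1) (z x y : A) :
    O.mul (O.mul z (O.conj y)) x + O.mul (O.mul z (O.conj x)) y = O.inner x y • z := by
  have h := O.rconj_mul hNe z (x + y)
  rw [O.conj_add, O.mul_add' z, O.add_mul', O.mul_add', O.mul_add'] at h
  rw [O.rconj_mul hNe z x, O.rconj_mul hNe z y, O.N_add, add_smul, add_smul] at h
  calc O.mul (O.mul z (O.conj y)) x + O.mul (O.mul z (O.conj x)) y
      = (O.N x • z + O.mul (O.mul z (O.conj x)) y
          + (O.mul (O.mul z (O.conj y)) x + O.N y • z))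
        - (O.N x • z + O.N y • z) := by abel
    _ = (O.N x • z + O.N y • z + O.inner x y • z) - (O.N x • z + O.N y • z) := by rw [h]
    _ = O.inner x y • z := by abel

lemma N_zero : O.N (0 : A) = 0 := by
  have := O.N_smul 0 0
  simpa using this

lemma inner_zero_right (a : A) : O.inner a 0 = 0 := by
  simp [OctonionAlgebra.inner, N_zero]

lemma reproducing (b : Fin 8 → A)
    (horth : ∀ i j, O.inner (b i) (b j) = if i = j then 1 else 0)
    (hspan : ∀ x : A, x ∈ Submodule.span k (Set.range b)) (w : A) :
    ∑ i : Fin 8, O.inner (b i) w • b i = w := by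
  have hsum : ∀ j, O.inner (∑ i : Fin 8, O.inner (b i) w • b i) (b j) = O.inner (b j) w := by
    intro j
    have : O.inner (∑ i : Fin 8, O.inner (b i) w • b i) (b j)
        = O.innerL (b j) (∑ i : Fin 8, O.inner (b i) w • b i) := rfl
    rw [this, map_sum]
    simp [OctonionAlgebra.innerL, horth, O.inner_smul_left]
  have hd : ∀ u, O.inner ((∑ i : Fin 8, O.inner (b i) w • b i) - w) u = 0 := by
    intro u
    induction hspan u using Submodule.span_induction with
    | mem v hv =>
        obtain ⟨j, rfl⟩ := hv
        rw [O.inner_sub_left, hsum j, inner_comm]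
        ring
    | zero => exact O.inner_zero_right _
    | add v w' _ _ hv hw => rw [O.inner_add_right, hv, hw]; ring
    | smul t v _ hv => rw [O.inner_smul_right, hv]; ring
  have := O.nondeg' _ hd
  exact sub_eq_zero.mp this

end OctonionAlgebra

/-- For any orthonormal basis `B` of an octonion algebra over an algebraically closed
field and any octonions `a, b`:
`∑_{x∈B} (x·a)(x·b) = (1/2)⟨a,b⟩ ∑_{x∈B} xx` as symmetric operators. -/
theorem stmt12 {k A : Type} [Field k] [IsAlgClosed k] [AddCommGroup A] [Module k A]
    (h2 : (2 : k) ≠ 0) (O : OctonionAlgebra k A)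
    (b : Fin 8 → A)
    (horth : ∀ i j, O.inner (b i) (b j) = if i = j then 1 else 0)
    (hspan : ∀ x : A, x ∈ Submodule.span k (Set.range b))
    (x y : A) :
    ∀ z : A,
      ∑ i : Fin 8, opval O (O.mul (b i) x) (O.mul (b i) y) z
        = ((2 : k)⁻¹ * O.inner x y) • (∑ i : Fin 8, opval O (b i) (b i) z) := by
  intro z
  have hb0 : O.inner (b 0) (b 0) = 1 := by simpa using horth 0 0
  have hNb0 : (2 : k) * O.N (b 0) = 1 := by rw [← O.inner_self, hb0]
  have hNb0' : O.N (b 0) ≠ 0 := by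
    intro h
    rw [h, mul_zero] at hNb0
    exact one_ne_zero hNb0.symm
  have hNe : O.N O.e = 1 := by
    have h := O.N_mul (b 0) O.e
    rw [O.mul_one'] at h
    have h' : O.N (b 0) * O.N O.e = O.N (b 0) * 1 := by rw [mul_one, ← h]
    exact mul_left_cancel₀ hNb0' h'
  have hs1 : ∑ i : Fin 8, O.inner (O.mul (b i) y) z • O.mul (b i) x
      = O.mul (O.mul z (O.conj y)) x := by
    have he : ∀ i : Fin 8, O.inner (O.mul (b i) y) z • O.mul (b i) x
        = O.rmul x (O.inner (b i) (O.mul z (O.conj y)) • b i) := by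
      intro i
      rw [O.adjoint (b i) y z]
      simp [OctonionAlgebra.rmul, O.smul_mul']
    rw [Finset.sum_congr rfl (fun i _ => he i), ← map_sum,
      O.reproducing b horth hspan]
    rfl
  have hs2 : ∑ i : Fin 8, O.inner (O.mul (b i) x) z • O.mul (b i) y
      = O.mul (O.mul z (O.conj x)) y := by
    have he : ∀ i : Fin 8, O.inner (O.mul (b i) x) z • O.mul (b i) y
        = O.rmul y (O.inner (b i) (O.mul z (O.conj x)) • b i) := by
      intro i
      rw [O.adjoint (b i) x z]
      simp [OctonionAlgebra.rmul, O.smul_mul']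
    rw [Finset.sum_congr rfl (fun i _ => he i), ← map_sum,
      O.reproducing b horth hspan]
    rfl
  have hrep := O.reproducing b horth hspan z
  simp only [opval]
  rw [← Finset.smul_sum, ← Finset.smul_sum, Finset.sum_add_distrib, hs1, hs2,
    O.linearized hNe z x y, Finset.sum_add_distrib, hrep, ← two_smul k z,
    smul_smul, smul_smul, smul_smul]
  congr 1
  field_simp
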